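/- Let a < b, u ∈ H¹(a,b), and let Πu ∈ P_m[a,b] (polynomial of degree ≤ m, m ≥ 1) satisfy Πu(a) = u(a), Πu(b) = u(b), and ∫_a^b (Πu − u)(t) v(t) dt = 0 for all polynomials v of degree ≤ m−2 (for m = 1 take Πu the linear interpolant). Then ∫_a^b |(Πu)'(t)|² dt ≤ 2 ∫_a^b |u'(t)|² dt. -/

import Mathlib

open MeasureTheory Polynomial

/-- L²-stability of the derivative of the degree-m projection. -/
theorem projection_derivative_stability (a b : ℝ) (hab : a < b) (m : ℕ) (hm : 1 ≤ m)
    (u u' : ℝ → ℝ)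
    (hderiv : ∀ t ∈ Set.Icc a b, HasDerivAt u (u' t) t)
    (hu'2 : IntegrableOn (fun t => (u' t) ^ 2) (Set.Icc a b))
    (p : Polynomial ℝ) (hdeg : p.natDegree ≤ m)
    (ha : p.eval a = u a) (hb : p.eval b = u b)
    (horth : 2 ≤ m → ∀ q : Polynomial ℝ, q.natDegree ≤ m - 2 →
      ∫ t in a..b, (p.eval t - u t) * q.eval t = 0) :
    ∫ t in a..b, (p.derivative.eval t) ^ 2 ≤ 2 * ∫ t in a..b, (u' t) ^ 2 := by
  have hle : a ≤ b := hab.le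
  have huIcc : Set.uIcc a b = Set.Icc a b := Set.uIcc_of_le hle
  -- u' is a.e. strongly measurable on Icc a b
  have hae : ∀ᵐ t ∂(volume.restrict (Set.Icc a b)), u' t = deriv u t := by
    rw [← Measure.restrict_congr_set Ioo_ae_eq_Icc]
    refine (ae_restrict_iff' measurableSet_Ioo).mpr (Filter.Eventually.of_forall ?_)
    intro t ht
    exact ((hderiv t (Set.Ioo_subset_Icc_self ht)).deriv).symm
  have hmeas : AEStronglyMeasurable u' (volume.restrict (Set.Icc a b)) :=
    ((measurable_deriv u).aestronglyMeasurable).congr (hae.mono fun t h => h.symm)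
  -- u' is integrable on Icc a b
  have hu'int : IntegrableOn u' (Set.Icc a b) := by
    refine Integrable.mono' (g := fun t => (u' t ^ 2 + 1) / 2) ?_ hmeas
      (Filter.Eventually.of_forall fun t => ?_)
    · exact (hu'2.add (integrableOn_const measure_Icc_lt_top.ne)).div_const 2
    · rw [Real.norm_eq_abs]
      nlinarith [sq_nonneg (|u' t| - 1), sq_abs (u' t)]
  have hu'II : IntervalIntegrable u' volume a b := by
    rw [intervalIntegrable_iff_integrableOn_Icc_of_le hle]; exact hu'int
  have hu'2II : IntervalIntegrable (fun t => u' t ^ 2) volume a b := by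
    rw [intervalIntegrable_iff_integrableOn_Icc_of_le hle]; exact hu'2
  -- continuity facts
  have hucont : ContinuousOn u (Set.Icc a b) := fun t ht =>
    (hderiv t ht).continuousAt.continuousWithinAt
  have hp'II : IntervalIntegrable (fun t => p.derivative.eval t) volume a b :=
    (Polynomial.continuous _).intervalIntegrable a b
  have hp'2II : IntervalIntegrable (fun t => p.derivative.eval t ^ 2) volume a b :=
    ((Polynomial.continuous _).pow 2).intervalIntegrable a b
  have hu'p'II : IntervalIntegrable (fun t => u' t * p.derivative.eval t) volume a b :=
    hu'II.mul_continuousOn ((Polynomial.continuous _).continuousOn)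
  have hg2II : IntervalIntegrable
      (fun t => (u t - p.eval t) * p.derivative.derivative.eval t) volume a b := by
    apply ContinuousOn.intervalIntegrable
    rw [huIcc]
    exact (hucont.sub (Polynomial.continuous p).continuousOn).mul
      (Polynomial.continuous _).continuousOn
  -- integration by parts
  have hibp : (∫ t in a..b, ((u' t - p.derivative.eval t) * p.derivative.eval t
      + (u t - p.eval t) * p.derivative.derivative.eval t)) = 0 := by
    have := intervalIntegral.integral_eq_sub_of_hasDerivAt
      (f := fun t => (u t - p.eval t) * p.derivative.eval t)
      (f' := fun t => (u' t - p.derivative.eval t) * p.derivative.eval t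
        + (u t - p.eval t) * p.derivative.derivative.eval t)
      (a := a) (b := b) ?_ ?_
    · rw [this, ha, hb]; ring
    · intro t ht
      rw [huIcc] at ht
      exact ((hderiv t ht).sub (p.hasDerivAt t)).mul (p.derivative.hasDerivAt t)
    · exact ((hu'II.sub hp'II).mul_continuousOn
        (Polynomial.continuous _).continuousOn).add hg2II
  have hg1II : IntervalIntegrable
      (fun t => (u' t - p.derivative.eval t) * p.derivative.eval t) volume a b :=
    (hu'II.sub hp'II).mul_continuousOn (Polynomial.continuous _).continuousOn
  -- the second integral vanishes
  have hg2 : (∫ t in a..b, (u t - p.eval t) * p.derivative.derivative.eval t) = 0 := by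
    rcases eq_or_lt_of_le hm with hm1 | hm2
    · -- m = 1 : second derivative is zero
      have h1 : p.natDegree ≤ 1 := hdeg.trans_eq hm1.symm
      have h0 : p.derivative.derivative = 0 := by
        have : p.derivative.natDegree = 0 :=
          Nat.le_zero.mp ((Polynomial.natDegree_derivative_le p).trans (by omega))
        rw [Polynomial.eq_C_of_natDegree_eq_zero this, Polynomial.derivative_C]
      simp [h0]
    · have hq : p.derivative.derivative.natDegree ≤ m - 2 := by
        have h1 := Polynomial.natDegree_derivative_le p
        have h2 := Polynomial.natDegree_derivative_le p.derivative
        omega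
      have := horth hm2 p.derivative.derivative hq
      have : (∫ t in a..b, -((p.eval t - u t) * p.derivative.derivative.eval t)) = 0 := by
        rw [intervalIntegral.integral_neg, this, neg_zero]
      rw [← this]
      congr 1; ext t; ring
    -- combine
  have hsplit : (∫ t in a..b, (u' t - p.derivative.eval t) * p.derivative.eval t) = 0 := by
    have := intervalIntegral.integral_add hg1II hg2II
    rw [hibp] at this
    linarith [this, hg2]
  have hkey : (∫ t in a..b, p.derivative.eval t ^ 2)
      = ∫ t in a..b, u' t * p.derivative.eval t := by
    have hsub : (∫ t in a..b, (u' t * p.derivative.eval t - p.derivative.eval t ^ 2))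
        = 0 := by
      rw [← hsplit]; congr 1; ext t; ring
    have := intervalIntegral.integral_sub hu'p'II hp'2II
    rw [hsub] at this
    linarith
  -- Young's inequality step
  have hyoung : (∫ t in a..b, u' t * p.derivative.eval t)
      ≤ ∫ t in a..b, (u' t ^ 2 / 2 + p.derivative.eval t ^ 2 / 2) := by
    apply intervalIntegral.integral_mono_on hle hu'p'II
      ((hu'2II.div_const 2).add (hp'2II.div_const 2))
    intro t _
    nlinarith [sq_nonneg (u' t - p.derivative.eval t)]
  have hadd : (∫ t in a..b, (u' t ^ 2 / 2 + p.derivative.eval t ^ 2 / 2))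
      = (∫ t in a..b, u' t ^ 2) / 2 + (∫ t in a..b, p.derivative.eval t ^ 2) / 2 := by
    rw [intervalIntegral.integral_add (hu'2II.div_const 2) (hp'2II.div_const 2),
      intervalIntegral.integral_div, intervalIntegral.integral_div]
  have hnn : 0 ≤ ∫ t in a..b, u' t ^ 2 :=
    intervalIntegral.integral_nonneg hle (fun t _ => sq_nonneg _)
  linarith [hkey, hyoung, hadd]
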